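/- Let B ∈ C^{n×n} with B_H ≥ 0 and suppose x₀ ∈ C^n satisfies √B_H B^j x₀ = 0 for all 0 ≤ j ≤ m−1. Then B^m x₀ = B_A^m x₀, where B_A := (B-B*)/2. -/

import Mathlib

open Matrix
open scoped ComplexOrder

/-- If `√B_H B^j x₀ = 0` for all `j < m`, then `B^m x₀ = B_A^m x₀`. -/
theorem pow_mulVec_eq_antiHermitianPart_pow_mulVec {n : ℕ}
    (B : Matrix (Fin n) (Fin n) ℂ)
    (hBH : ((1/2 : ℂ) • (B + Bᴴ)).PosSemidef) (m : ℕ) (x0 : Fin n → ℂ)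
    (hker : ∀ j < m, ((hBH.1.eigenvectorUnitary : Matrix (Fin n) (Fin n) ℂ) *
      diagonal ((↑) ∘ (√·) ∘ hBH.1.eigenvalues) *
      (star hBH.1.eigenvectorUnitary : Matrix (Fin n) (Fin n) ℂ)) *ᵥ (B ^ j *ᵥ x0) = 0) :
    B ^ m *ᵥ x0 = ((1/2 : ℂ) • (B - Bᴴ)) ^ m *ᵥ x0 := by
  induction m with
  | zero => simp
  | succ m ih =>
    have ihm := ih (fun j hj => hker j (hj.trans (Nat.lt_succ_self m)))
    have h0 : ((1/2 : ℂ) • (B + Bᴴ)) *ᵥ (B ^ m *ᵥ x0) = 0 := by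
      have hsq : ((hBH.1.eigenvectorUnitary : Matrix (Fin n) (Fin n) ℂ) *
          diagonal ((↑) ∘ (√·) ∘ hBH.1.eigenvalues) *
          (star hBH.1.eigenvectorUnitary : Matrix (Fin n) (Fin n) ℂ)) *
          ((hBH.1.eigenvectorUnitary : Matrix (Fin n) (Fin n) ℂ) *
          diagonal ((↑) ∘ (√·) ∘ hBH.1.eigenvalues) *
          (star hBH.1.eigenvectorUnitary : Matrix (Fin n) (Fin n) ℂ)) = (1/2 : ℂ) • (B + Bᴴ) := by
        conv_rhs => rw [hBH.1.spectral_theorem, Unitary.conjStarAlgAut_apply]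
        have hU : (star hBH.1.eigenvectorUnitary : Matrix (Fin n) (Fin n) ℂ) *
            (hBH.1.eigenvectorUnitary : Matrix (Fin n) (Fin n) ℂ) = 1 :=
          Unitary.star_mul_self_of_mem hBH.1.eigenvectorUnitary.2
        simp only [mul_assoc]
        rw [← mul_assoc _ (hBH.1.eigenvectorUnitary : Matrix (Fin n) (Fin n) ℂ), hU, one_mul]
        rw [← mul_assoc (diagonal _) (diagonal _),
          diagonal_mul_diagonal]
        congr 3
        funext i
        simp only [Function.comp_apply, ← Complex.ofReal_mul,
          Real.mul_self_sqrt (hBH.eigenvalues_nonneg i)]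
        rfl
      rw [← hsq, ← mulVec_mulVec, hker m (Nat.lt_succ_self m), mulVec_zero]
    have hB : B = ((1/2 : ℂ) • (B + Bᴴ)) + ((1/2 : ℂ) • (B - Bᴴ)) := by
      module
    have key : B *ᵥ (B ^ m *ᵥ x0) = ((1/2 : ℂ) • (B - Bᴴ)) *ᵥ (B ^ m *ᵥ x0) := by
      calc B *ᵥ (B ^ m *ᵥ x0)
          = ((1/2 : ℂ) • (B + Bᴴ)) *ᵥ (B ^ m *ᵥ x0)
            + ((1/2 : ℂ) • (B - Bᴴ)) *ᵥ (B ^ m *ᵥ x0) := by rw [← add_mulVec, ← hB]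
        _ = ((1/2 : ℂ) • (B - Bᴴ)) *ᵥ (B ^ m *ᵥ x0) := by rw [h0, zero_add]
    rw [pow_succ', pow_succ', ← mulVec_mulVec, ← mulVec_mulVec, key, ihm]
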